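/- If G is an upper-critical graph and x, y are adjacent vertices both of which are complete vertices, then the contraction G/xy is upper-critical with one fewer vertex and chromatic number χ(G) − 1. -/

import Mathlib

open SimpleGraph

/-- A graph is *upper-critical* if adding any edge between two distinct
non-adjacent vertices strictly increases the chromatic number. -/
def UpperCritical {V : Type*} (G : SimpleGraph V) : Prop :=
  ∀ x y : V, x ≠ y → ¬G.Adj x y →
    G.chromaticNumber < (G ⊔ SimpleGraph.edge x y).chromaticNumber

section Aux

variable {W : Type*} [Fintype W] [DecidableEq W]

/-- If `x` is universal in `G` and `K` is the induced subgraph on `W \ {x}`,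
then `G` is `(n+1)`-colorable iff `K` is `n`-colorable. -/
lemma aux_colorable_iff (G : SimpleGraph W) (x : W) (hx : ∀ w : W, w ≠ x → G.Adj x w)
    (K : SimpleGraph {v : W // v ≠ x}) (hK : ∀ a b, K.Adj a b ↔ G.Adj a b) (n : ℕ) :
    G.Colorable (n + 1) ↔ K.Colorable n := by
  constructor
  · rintro ⟨c⟩
    have hne : ∀ a : {v : W // v ≠ x}, c a ≠ c x := by
      intro a
      exact c.valid ((hx a a.2).symm)
    have hsome : ∀ a : {v : W // v ≠ x}, (finSuccEquiv' (c x) (c a)).isSome := by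
      intro a
      rw [Option.isSome_iff_ne_none]
      intro hn
      have := (finSuccEquiv' (c x)).injective (hn.trans (finSuccEquiv'_at (c x)).symm)
      exact hne a this
    refine ⟨SimpleGraph.Coloring.mk (fun a => (finSuccEquiv' (c x) (c a)).get (hsome a)) ?_⟩
    intro a b hab heq
    have hGab : G.Adj a b := (hK a b).1 hab
    have : c (a : W) ≠ c (b : W) := c.valid hGab
    apply this
    apply (finSuccEquiv' (c x)).injective
    rw [← Option.some_get (hsome a), ← Option.some_get (hsome b)]
    exact congrArg _ heq
  · rintro ⟨d⟩
    refine ⟨SimpleGraph.Coloring.mk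
      (fun v => if h : v = x then Fin.last n else (d ⟨v, h⟩).castSucc) ?_⟩
    intro u v huv
    by_cases hu : u = x <;> by_cases hv : v = x
    · rw [hu, hv] at huv; exact absurd huv (G.irrefl)
    · simp only [dif_pos hu, dif_neg hv]
      exact fun h => (Fin.castSucc_lt_last _).ne' h
    · simp only [dif_pos hv, dif_neg hu]
      exact fun h => (Fin.castSucc_lt_last _).ne h
    · simp only [dif_neg hu, dif_neg hv]
      intro h
      have hadj : K.Adj ⟨u, hu⟩ ⟨v, hv⟩ := (hK _ _).2 huv
      exact d.valid hadj (Fin.castSucc_injective _ h)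

/-- If `x` is universal in `G` and `K` is the induced subgraph on `W \ {x}`,
then `χ(G) = χ(K) + 1`. -/
lemma aux_chrom (G : SimpleGraph W) (x : W) (hx : ∀ w : W, w ≠ x → G.Adj x w)
    (K : SimpleGraph {v : W // v ≠ x}) (hK : ∀ a b, K.Adj a b ↔ G.Adj a b) :
    G.chromaticNumber = K.chromaticNumber + 1 := by
  have hKc : K.Colorable (ENat.toNat K.chromaticNumber) :=
    K.colorable_chromaticNumber_of_fintype
  have hGc : G.Colorable (ENat.toNat G.chromaticNumber) :=
    G.colorable_chromaticNumber_of_fintype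
  have hKfin : K.chromaticNumber ≠ ⊤ :=
    (lt_of_le_of_lt (hKc.chromaticNumber_le) (WithTop.coe_lt_top _)).ne
  have hGfin : G.chromaticNumber ≠ ⊤ :=
    (lt_of_le_of_lt (hGc.chromaticNumber_le) (WithTop.coe_lt_top _)).ne
  apply le_antisymm
  · have hG1 : G.Colorable (ENat.toNat K.chromaticNumber + 1) :=
      (aux_colorable_iff G x hx K hK _).2 hKc
    calc G.chromaticNumber ≤ ((ENat.toNat K.chromaticNumber + 1 : ℕ) : ℕ∞) :=
          hG1.chromaticNumber_le
      _ = K.chromaticNumber + 1 := by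
          rw [Nat.cast_add, Nat.cast_one, ENat.coe_toNat hKfin]
  · -- G has at least one vertex x, so χ(G) ≥ 1
    have h0 : ENat.toNat G.chromaticNumber ≠ 0 := by
      intro h0
      have h1 := hGc
      rw [h0] at h1
      exact (h1.some x).elim0
    obtain ⟨m, hm⟩ : ∃ m, ENat.toNat G.chromaticNumber = m + 1 :=
      ⟨ENat.toNat G.chromaticNumber - 1, by omega⟩
    have hKm : K.Colorable m := by
      rw [hm] at hGc
      exact (aux_colorable_iff G x hx K hK m).1 hGc
    calc K.chromaticNumber + 1 ≤ (m : ℕ∞) + 1 := by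
          exact add_le_add_left hKm.chromaticNumber_le 1
      _ = ((m + 1 : ℕ) : ℕ∞) := by rw [Nat.cast_add, Nat.cast_one]
      _ = G.chromaticNumber := by rw [← hm, ENat.coe_toNat hGfin]

end Aux

theorem stmt_19 {V : Type*} [Fintype V] [DecidableEq V] (G : SimpleGraph V) (hUC : UpperCritical G)
    (x y : V) (hadj : G.Adj x y)
    (hx : ∀ w : V, w ≠ x → G.Adj x w) (hy : ∀ w : V, w ≠ y → G.Adj y w)
    (H : SimpleGraph {v : V // v ≠ x})
    -- `H` is the contraction `G/xy`, with `y` playing the role of the merged vertex.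
    (hH : ∀ a b : {v : V // v ≠ x}, H.Adj a b ↔
      (((a : V) = y ∧ (b : V) ≠ y ∧ (G.Adj x b ∨ G.Adj y b)) ∨
       ((b : V) = y ∧ (a : V) ≠ y ∧ (G.Adj x a ∨ G.Adj y a)) ∨
       ((a : V) ≠ y ∧ (b : V) ≠ y ∧ G.Adj a b))) :
    UpperCritical H ∧ Fintype.card {v : V // v ≠ x} = Fintype.card V - 1 ∧
      H.chromaticNumber = G.chromaticNumber - 1 := by
  -- H is just the induced subgraph of G on V \ {x}
  have hK : ∀ a b : {v : V // v ≠ x}, H.Adj a b ↔ G.Adj a b := by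
    intro a b
    rw [hH]
    constructor
    · rintro (⟨ha, hb, -⟩ | ⟨hb, ha, -⟩ | ⟨-, -, h⟩)
      · rw [ha]; exact hy b hb
      · rw [hb]; exact (hy a ha).symm
      · exact h
    · intro h
      rcases eq_or_ne (a : V) y with ha | ha
      · have hb : (b : V) ≠ y := by rw [ha] at h; exact fun hb => G.irrefl (hb ▸ h)
        exact Or.inl ⟨ha, hb, Or.inl (hx b b.2)⟩
      · rcases eq_or_ne (b : V) y with hb | hb
        · exact Or.inr (Or.inl ⟨hb, ha, Or.inl (hx a a.2)⟩)
        · exact Or.inr (Or.inr ⟨ha, hb, h⟩)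
  have hchrom : G.chromaticNumber = H.chromaticNumber + 1 := aux_chrom G x hx H hK
  refine ⟨?_, ?_, ?_⟩
  · -- upper-critical
    intro a b hab hnadj
    have hab' : (a : V) ≠ (b : V) := fun h => hab (Subtype.ext h)
    have hnadj' : ¬G.Adj a b := fun h => hnadj ((hK a b).2 h)
    have hcrit := hUC a b hab' hnadj'
    -- x is universal in G ⊔ edge a b
    have hx' : ∀ w : V, w ≠ x → (G ⊔ SimpleGraph.edge (a : V) (b : V)).Adj x w :=
      fun w hw => Or.inl (hx w hw)
    have hK' : ∀ c d : {v : V // v ≠ x},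
        (H ⊔ SimpleGraph.edge a b).Adj c d ↔ (G ⊔ SimpleGraph.edge (a : V) (b : V)).Adj c d := by
      intro c d
      simp only [sup_adj, edge_adj, hK, Subtype.ext_iff, ne_eq]
    have h2 := aux_chrom (G ⊔ SimpleGraph.edge (a : V) (b : V)) x hx' _ hK'
    rw [hchrom, h2] at hcrit
    exact (WithTop.add_lt_add_iff_right WithTop.one_ne_top).mp hcrit
  · -- cardinality
    have : Fintype.card {v : V // ¬ v = x} = Fintype.card V - Fintype.card {v : V // v = x} :=
      Fintype.card_subtype_compl _
    simpa [Fintype.card_subtype_eq] using this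
  · rw [hchrom]
    exact ((ENat.addLECancellable_of_ne_top (by simp)).add_tsub_cancel_right).symm
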